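/- Let Π_Γ(ℝⁿ) = ⋃_{u ∈ ℝⁿ} π(u), where π(u) = {p ∈ Π_Γ : P_Γ(u) = pᵀu + h_Γ(p)}. Then the density entropy h_Γ is a concave function on every convex subset of Π_Γ(ℝⁿ). -/

import Mathlib

open Filter Topology Matrix
open scoped Classical

namespace Soft

/-! Basic notions for nearest-neighbour subshifts of finite type (NNSOFT) on `ℤ^d`:
boxes, allowed colorings, color counts, the grand partition function `Z_Γ(m,u)`. -/

/-- The set of sites of the box `⟨m⟩ = [m₁] × ⋯ × [m_d]` (zero-indexed). -/
def box {d : ℕ} (m : Fin d → ℕ) : Set (Fin d → ℕ) := {x | ∀ i, x i < m i}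

/-- The site `x + e_k`. -/
def step {d : ℕ} (x : Fin d → ℕ) (k : Fin d) : Fin d → ℕ :=
  Function.update x k (x k + 1)

/-- `vol(m) = m₁ ⋯ m_d`. -/
def vol {d : ℕ} (m : Fin d → ℕ) : ℕ := ∏ i, m i

/-- `φ` satisfies all nearest-neighbour constraints imposed by `Γ` inside the box `⟨m⟩`:
whenever `x` and `x + e_k` both lie in the box, `(φ x, φ (x + e_k)) ∈ Γ k`. -/
def Allowed {d n : ℕ} (Γ : Fin d → Set (Fin n × Fin n)) (m : Fin d → ℕ)
    (φ : (Fin d → ℕ) → Fin n) : Prop :=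
  ∀ x ∈ box m, ∀ k : Fin d, step x k ∈ box m → (φ x, φ (step x k)) ∈ Γ k

/-- `φ` takes the default color `0` outside the box `⟨m⟩`; colorings of `⟨m⟩` are represented
by functions on all of `ℕ^d` normalized in this way (so that there are finitely many). -/
def Normalized {d n : ℕ} [NeZero n] (m : Fin d → ℕ) (φ : (Fin d → ℕ) → Fin n) : Prop :=
  ∀ x, x ∉ box m → φ x = 0

/-- `C_Γ(⟨m⟩)`: the set of `Γ`-allowed colorings of the box `⟨m⟩`. -/
def Col {d n : ℕ} [NeZero n] (Γ : Fin d → Set (Fin n × Fin n)) (m : Fin d → ℕ) :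
    Set ((Fin d → ℕ) → Fin n) :=
  {φ | Allowed Γ m φ ∧ Normalized m φ}

/-- `Γ`-allowed colorings of the whole lattice `ℤ^d`. -/
def AllowedZ {d n : ℕ} (Γ : Fin d → Set (Fin n × Fin n)) (φ : (Fin d → ℤ) → Fin n) : Prop :=
  ∀ (x : Fin d → ℤ) (k : Fin d), (φ x, φ (Function.update x k (x k + 1))) ∈ Γ k

/-- `c(φ)_j`: the number of sites of `⟨m⟩` colored `j` by `φ`. -/
noncomputable def cnt {d n : ℕ} (m : Fin d → ℕ) (φ : (Fin d → ℕ) → Fin n) (j : Fin n) : ℕ :=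
  Nat.card {x : Fin d → ℕ // x ∈ box m ∧ φ x = j}

/-- The weight `exp (c(φ)ᵀ u)` of a coloring `φ` of `⟨m⟩`. -/
noncomputable def weight {d n : ℕ} (m : Fin d → ℕ) (φ : (Fin d → ℕ) → Fin n)
    (u : Fin n → ℝ) : ℝ :=
  Real.exp (∑ j, (cnt m φ j : ℝ) * u j)

/-- The grand partition function `Z_Γ(m,u) = Σ_{φ ∈ C_Γ(⟨m⟩)} exp (c(φ)ᵀ u)`. -/
noncomputable def Z {d n : ℕ} [NeZero n] (Γ : Fin d → Set (Fin n × Fin n)) (m : Fin d → ℕ)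
    (u : Fin n → ℝ) : ℝ :=
  ∑' φ : Col Γ m, weight m φ.1 u

/-! Density points and the density entropy. -/

/-- `p ∈ Π_Γ`: `p` is a probability vector arising as a limiting color-frequency vector of
allowed colorings of a sequence of boxes all whose sides tend to infinity. -/
def IsDensityPoint {d n : ℕ} [NeZero n] (Γ : Fin d → Set (Fin n × Fin n))
    (p : Fin n → ℝ) : Prop :=
  (∀ i, 0 ≤ p i) ∧ (∑ i, p i) = 1 ∧
  ∃ (mq : ℕ → Fin d → ℕ) (cq : ℕ → Fin n → ℕ),
    Tendsto mq atTop atTop ∧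
    (∀ q, (∑ i, cq q i) = vol (mq q)) ∧
    (∀ q, ∃ φ ∈ Col Γ (mq q), ∀ j, cnt (mq q) φ j = cq q j) ∧
    Tendsto (fun q => fun i => (cq q i : ℝ) / (vol (mq q) : ℝ)) atTop (𝓝 p)

/-- `#C_Γ(⟨m⟩, c)`: the number of `Γ`-allowed colorings of `⟨m⟩` with color-frequency
vector `c`. -/
noncomputable def NCol {d n : ℕ} [NeZero n] (Γ : Fin d → Set (Fin n × Fin n))
    (m : Fin d → ℕ) (c : Fin n → ℕ) : ℕ :=
  Nat.card {φ : (Fin d → ℕ) → Fin n // φ ∈ Col Γ m ∧ ∀ j, cnt m φ j = c j}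

/-- The density entropy `h_Γ(p)`: the supremum, over all sequences of boxes and
color-frequency vectors converging in frequency to `p`, of the exponential growth rate
`limsup_q log #C_Γ(⟨m_q⟩,c_q) / vol(m_q)`. -/
noncomputable def densityEntropy {d n : ℕ} [NeZero n] (Γ : Fin d → Set (Fin n × Fin n))
    (p : Fin n → ℝ) : ℝ :=
  sSup {h | ∃ (mq : ℕ → Fin d → ℕ) (cq : ℕ → Fin n → ℕ),
    Tendsto mq atTop atTop ∧
    (∀ q, (∑ i, cq q i) = vol (mq q)) ∧
    (∀ q, ∃ φ ∈ Col Γ (mq q), ∀ j, cnt (mq q) φ j = cq q j) ∧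
    Tendsto (fun q => fun i => (cq q i : ℝ) / (vol (mq q) : ℝ)) atTop (𝓝 p) ∧
    h = Filter.limsup
      (fun q => Real.log (NCol Γ (mq q) (cq q)) / (vol (mq q) : ℝ)) atTop}

/-- `π(u) = {p ∈ Π_Γ : P_Γ(u) = pᵀu + h_Γ(p)}`. -/
def piSet {d n : ℕ} [NeZero n] (Γ : Fin d → Set (Fin n × Fin n))
    (P : (Fin n → ℝ) → ℝ) (u : Fin n → ℝ) : Set (Fin n → ℝ) :=
  {p | IsDensityPoint Γ p ∧ P u = (∑ i, p i * u i) + densityEntropy Γ p}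

lemma box_finite {d : ℕ} (m : Fin d → ℕ) : (box m).Finite := by
  apply Set.Finite.subset (Set.Finite.pi (fun i : Fin d => Set.finite_Iio (m i)))
  intro x hx
  exact fun i _ => hx i

lemma col_finite {d n : ℕ} [NeZero n] (Γ : Fin d → Set (Fin n × Fin n)) (m : Fin d → ℕ) :
    Finite ↥(Col Γ m) := by
  have hb : Finite ↥(box m) := (box_finite m)
  apply Finite.of_injective (fun φ : ↥(Col Γ m) => (fun x : ↥(box m) => φ.1 x.1))
  intro φ ψ h
  apply Subtype.ext
  funext x
  by_cases hx : x ∈ box m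
  · exact congrFun h ⟨x, hx⟩
  · rw [φ.2.2 x hx, ψ.2.2 x hx]

lemma fib_finite {d n : ℕ} [NeZero n] (Γ : Fin d → Set (Fin n × Fin n)) (m : Fin d → ℕ)
    (c : Fin n → ℕ) :
    Finite {φ : (Fin d → ℕ) → Fin n // φ ∈ Col Γ m ∧ ∀ j, cnt m φ j = c j} := by
  have := col_finite Γ m
  apply Finite.of_injective
    (fun φ : {φ : (Fin d → ℕ) → Fin n // φ ∈ Col Γ m ∧ ∀ j, cnt m φ j = c j} =>
      (⟨φ.1, φ.2.1⟩ : ↥(Col Γ m)))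
  intro φ ψ h
  have h2 : (⟨φ.1, φ.2.1⟩ : ↥(Col Γ m)) = ⟨ψ.1, ψ.2.1⟩ := h
  have h3 := congrArg Subtype.val h2
  exact Subtype.ext h3

lemma Z_ge {d n : ℕ} [NeZero n] (Γ : Fin d → Set (Fin n × Fin n)) (m : Fin d → ℕ)
    (c : Fin n → ℕ) (w : Fin n → ℝ)
    (hne : ∃ φ ∈ Col Γ m, ∀ j, cnt m φ j = c j) :
    (NCol Γ m c : ℝ) * Real.exp (∑ j, (c j : ℝ) * w j) ≤ Z Γ m w ∧ 1 ≤ NCol Γ m c := by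
  have hcol : Finite ↥(Col Γ m) := col_finite Γ m
  have hfib := fib_finite Γ m c
  set F := {φ : (Fin d → ℕ) → Fin n // φ ∈ Col Γ m ∧ ∀ j, cnt m φ j = c j} with hF
  have hFne : Nonempty F := by
    obtain ⟨φ, hφ, hc⟩ := hne
    exact ⟨⟨φ, hφ, hc⟩⟩
  have hcard : 1 ≤ NCol Γ m c := Nat.card_pos
  refine ⟨?_, hcard⟩
  have hle : ∑' φ : F, weight m φ.1 w ≤ Z Γ m w := by
    apply Summable.tsum_le_tsum_of_inj (fun φ : F => (⟨φ.1, φ.2.1⟩ : ↥(Col Γ m)))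
    · intro φ ψ h
      have h2 : (⟨φ.1, φ.2.1⟩ : ↥(Col Γ m)) = ⟨ψ.1, ψ.2.1⟩ := h
      have h3 := congrArg Subtype.val h2
      exact Subtype.ext h3
    · intro _ _
      exact (Real.exp_pos _).le
    · intro b
      exact le_refl _
    · exact Summable.of_finite
    · exact Summable.of_finite
  have hval : ∑' φ : F, weight m φ.1 w
      = (NCol Γ m c : ℝ) * Real.exp (∑ j, (c j : ℝ) * w j) := by
    have : ∀ φ : F, weight m φ.1 w = Real.exp (∑ j, (c j : ℝ) * w j) := by
      intro φ
      unfold weight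
      congr 1
      exact Finset.sum_congr rfl (fun j _ => by rw [φ.2.2 j])
    rw [tsum_congr this]
    haveI : Fintype F := Fintype.ofFinite F
    rw [tsum_fintype, Finset.sum_const, Finset.card_univ, nsmul_eq_mul,
      NCol, Nat.card_eq_fintype_card]
  rw [← hval]
  exact hle

lemma entropy_le {d n : ℕ} [NeZero n] (Γ : Fin d → Set (Fin n × Fin n))
    (P : (Fin n → ℝ) → ℝ)
    (hP : ∀ u, Tendsto (fun m : Fin d → ℕ =>
        Real.log (Z Γ m u) / (vol m : ℝ)) atTop (𝓝 (P u)))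
    (p : Fin n → ℝ) (hp : IsDensityPoint Γ p) (w : Fin n → ℝ) :
    densityEntropy Γ p ≤ P w - ∑ i, p i * w i := by
  obtain ⟨-, -, mq0, cq0, h1, h2, h3, h4⟩ := hp
  apply csSup_le
  · exact ⟨_, mq0, cq0, h1, h2, h3, h4, rfl⟩
  rintro h ⟨mq, cq, h1, h2, h3, h4, rfl⟩
  -- the comparison sequence
  set b : ℕ → ℝ := fun q =>
    Real.log (Z Γ (mq q) w) / (vol (mq q) : ℝ) - ∑ j, ((cq q j : ℝ) / (vol (mq q) : ℝ)) * w j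
    with hbdef
  have hbt : Tendsto b atTop (𝓝 (P w - ∑ i, p i * w i)) := by
    apply Tendsto.sub ((hP w).comp h1)
    have : Tendsto (fun q => ∑ j, ((cq q j : ℝ) / (vol (mq q) : ℝ)) * w j) atTop
        (𝓝 (∑ j, p j * w j)) := by
      apply tendsto_finset_sum
      intro j _
      exact (tendsto_pi_nhds.mp h4 j).mul_const (w j)
    exact this
  have hvol : ∀ᶠ q in atTop, 0 < vol (mq q) := by
    filter_upwards [h1.eventually_ge_atTop (fun _ => 1)] with q hq
    exact Finset.prod_pos (fun i _ => hq i)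
  have hab : ∀ᶠ q in atTop,
      Real.log (NCol Γ (mq q) (cq q)) / (vol (mq q) : ℝ) ≤ b q := by
    filter_upwards [hvol] with q hv
    obtain ⟨hZ, hN⟩ := Z_ge Γ (mq q) (cq q) w (h3 q)
    have hNpos : (0:ℝ) < (NCol Γ (mq q) (cq q) : ℝ) := by exact_mod_cast hN
    have hlog : Real.log (NCol Γ (mq q) (cq q)) + ∑ j, ((cq q j : ℝ)) * w j
        ≤ Real.log (Z Γ (mq q) w) := by
      have h0 : (0:ℝ) < (NCol Γ (mq q) (cq q) : ℝ) * Real.exp (∑ j, ((cq q j : ℝ)) * w j) :=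
        mul_pos hNpos (Real.exp_pos _)
      have := Real.log_le_log h0 hZ
      rwa [Real.log_mul hNpos.ne' (Real.exp_pos _).ne', Real.log_exp] at this
    have hvr : (0:ℝ) < (vol (mq q) : ℝ) := by exact_mod_cast hv
    rw [hbdef]
    have hsum : ∑ j, ((cq q j : ℝ) / (vol (mq q) : ℝ)) * w j
        = (∑ j, ((cq q j : ℝ)) * w j) / (vol (mq q) : ℝ) := by
      rw [Finset.sum_div]
      exact Finset.sum_congr rfl (fun j _ => by ring)
    simp only [hsum]
    rw [le_sub_iff_add_le, ← add_div, div_le_div_iff_of_pos_right hvr]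
    exact hlog
  -- bound the limsup
  have hcb : IsCoboundedUnder (· ≤ ·)  atTop
      (fun q => Real.log (NCol Γ (mq q) (cq q)) / (vol (mq q) : ℝ)) := by
    apply isCoboundedUnder_le_of_eventually_le atTop (x := 0)
    filter_upwards [hvol] with q hv
    have hN := (Z_ge Γ (mq q) (cq q) w (h3 q)).2
    have : (0:ℝ) ≤ Real.log (NCol Γ (mq q) (cq q)) := Real.log_nonneg (by exact_mod_cast hN)
    positivity
  have hbb : IsBoundedUnder (· ≤ ·) atTop b := hbt.isBoundedUnder_le
  calc limsup (fun q => Real.log (NCol Γ (mq q) (cq q)) / (vol (mq q) : ℝ)) atTop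
      ≤ limsup b atTop := limsup_le_limsup hab hcb hbb
    _ = P w - ∑ i, p i * w i := hbt.limsup_eq

/-- With `Π_Γ(ℝⁿ) = ⋃_u π(u)`, the density entropy `h_Γ` is a concave
function on every convex subset of `Π_Γ(ℝⁿ)`. -/
theorem densityEntropy_concave_on_convex_subsets
    (d n : ℕ) (hd : 0 < d) [NeZero n]
    (Γ : Fin d → Set (Fin n × Fin n))
    (hne : ∃ φ : (Fin d → ℤ) → Fin n, AllowedZ Γ φ)
    (P : (Fin n → ℝ) → ℝ)
    (hP : ∀ u, Tendsto (fun m : Fin d → ℕ =>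
        Real.log (Z Γ m u) / (vol m : ℝ)) atTop (𝓝 (P u))) :
    ∀ A : Set (Fin n → ℝ), A ⊆ (⋃ u : Fin n → ℝ, piSet Γ P u) → Convex ℝ A →
      ConcaveOn ℝ A (densityEntropy Γ) := by
  intro A hA hconv
  refine ⟨hconv, ?_⟩
  intro p hp q hq a b ha hb hab
  -- r is in some piSet
  have hr : a • p + b • q ∈ A := hconv hp hq ha hb hab
  obtain ⟨_, ⟨w, rfl⟩, hrw⟩ := hA hr
  obtain ⟨hrd, hre⟩ := hrw
  obtain ⟨_, ⟨u, rfl⟩, hpd, -⟩ := hA hp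
  obtain ⟨_, ⟨v, rfl⟩, hqd, -⟩ := hA hq
  have hple := entropy_le Γ P hP p hpd w
  have hqle := entropy_le Γ P hP q hqd w
  have hsum : ∑ i, (a • p + b • q) i * w i = a * ∑ i, p i * w i + b * ∑ i, q i * w i := by
    rw [Finset.mul_sum, Finset.mul_sum, ← Finset.sum_add_distrib]
    refine Finset.sum_congr rfl (fun i _ => ?_)
    simp only [Pi.add_apply, Pi.smul_apply, smul_eq_mul]
    ring
  have hrval : densityEntropy Γ (a • p + b • q)
      = P w - ∑ i, (a • p + b • q) i * w i := by linarith [hre]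
  have := add_le_add (mul_le_mul_of_nonneg_left hple ha)
    (mul_le_mul_of_nonneg_left hqle hb)
  rw [hrval, hsum]
  simp only [smul_eq_mul]
  have h2 : a * (P w - ∑ i, p i * w i) + b * (P w - ∑ i, q i * w i)
      = P w - (a * ∑ i, p i * w i + b * ∑ i, q i * w i) := by
    linear_combination (P w) * hab
  linarith [this, h2]


end Soft
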